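/- arXiv:2403.06105 — 2 statements merged into one kernel-verified Lean document; each statement's English description precedes it below -/
import Mathlib

section
/- Let A be an invertible real n×n matrix, let (M_u)_{u∈ℕ} be a sequence of invertible n×n integer matrices with M_u/u → A entrywise as u → ∞, and let (ω_u) be a sequence in ℝⁿ with ω_u → ω. Fix z ∈ ℤⁿ and set w(u) = (M_uᵀ)⁻¹(z − ω_u/(2π)) and w = (Aᵀ)⁻¹(z − ω/(2π)). Then the rescaled discrete eigenvalues converge to the continuous eigenvalue: lim_{u→∞} 4u² ∑_{k=1}^n sin²(π w(u)_k) = 4π²‖w‖². (This expresses that u²·Spec(L_{DTⁿ_u}) converges to Spec(L_{ℝTⁿ}) for a converging family of discrete tori with converging torsion.) -/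
open Real Matrix Filter

lemma abs_sin_sub_le_cube (x : ℝ) (hx : |x| ≤ 1) : |Real.sin x - x| ≤ |x| ^ 3 := by
  have h := Real.sin_bound hx
  have h4 : |x| ^ 4 ≤ |x| ^ 3 := pow_le_pow_of_le_one (abs_nonneg x) hx (by norm_num)
  have h2 := abs_add_le (Real.sin x - (x - x ^ 3 / 6)) (-(x ^ 3 / 6))
  rw [show Real.sin x - (x - x ^ 3 / 6) + -(x ^ 3 / 6) = Real.sin x - x from by ring,
    abs_neg, abs_div, abs_pow] at h2
  have h6 : |(6 : ℝ)| = 6 := by norm_num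
  rw [h6] at h2
  nlinarith [abs_nonneg x, pow_nonneg (abs_nonneg x) 3]

/-- convergence of rescaled connection-Laplacian eigenvalues of a converging
family of discrete tori `ℤⁿ/M_uℤⁿ` (with `M_u/u → A` and torsion data `ω_u → ω`) to the
corresponding eigenvalue of the connection Laplacian on the real torus `ℝⁿ/Aℤⁿ`:
`4u² ∑_k sin²(π w(u)_k) → 4π²‖w‖²` where `w(u) = (M_uᵀ)⁻¹(z - ω_u/(2π))` and
`w = (Aᵀ)⁻¹(z - ω/(2π))`. -/
theorem discrete_tori_eigenvalue_convergence
    (n : ℕ) (A : Matrix (Fin n) (Fin n) ℝ) (hA : IsUnit A.det)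
    (M : ℕ → Matrix (Fin n) (Fin n) ℤ) (hM : ∀ u, (M u).det ≠ 0)
    (hMA : ∀ i j, Tendsto (fun u : ℕ => (((M u) i j : ℝ)) / u) atTop (nhds (A i j)))
    (ω : ℕ → Fin n → ℝ) (ω₀ : Fin n → ℝ) (hω : Tendsto ω atTop (nhds ω₀))
    (z : Fin n → ℤ)
    (w : ℕ → Fin n → ℝ)
    (hw : ∀ u, w u = (((M u).map (Int.cast : ℤ → ℝ)).transpose)⁻¹.mulVec
        fun k => (z k : ℝ) - ω u k / (2 * Real.pi))
    (w₀ : Fin n → ℝ)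
    (hw₀ : w₀ = A.transpose⁻¹.mulVec fun k => (z k : ℝ) - ω₀ k / (2 * Real.pi)) :
    Tendsto (fun u : ℕ => 4 * (u : ℝ) ^ 2 * ∑ k, Real.sin (Real.pi * w u k) ^ 2)
      atTop (nhds (4 * Real.pi ^ 2 * ∑ k, w₀ k ^ 2)) := by
  -- the rescaled matrices
  set B : ℕ → Matrix (Fin n) (Fin n) ℝ :=
    fun u => (((u : ℝ)⁻¹ • (M u).map (Int.cast : ℤ → ℝ))).transpose with hB
  -- entrywise convergence of B to Aᵀ
  have hBA : Tendsto B atTop (nhds A.transpose) := by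
    refine tendsto_pi_nhds.2 ?_
    intro i
    rw [tendsto_pi_nhds]
    intro j
    have := hMA j i
    simp only [hB, Matrix.transpose_apply, Matrix.smul_apply, Matrix.map_apply, smul_eq_mul]
    refine this.congr fun u => by rw [div_eq_inv_mul]
  -- determinant convergence
  have hdet : Tendsto (fun u => (B u).det) atTop (nhds A.transpose.det) :=
    ((Continuous.matrix_det continuous_id).continuousAt (x := A.transpose)).tendsto.comp hBA
  have hAdet : A.transpose.det ≠ 0 := by
    rw [Matrix.det_transpose]
    exact hA.ne_zero
  -- inverse entrywise convergence
  have hinv : ∀ i j, Tendsto (fun u => (B u)⁻¹ i j) atTop (nhds (A.transpose⁻¹ i j)) := by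
    intro i j
    have hadj : Tendsto (fun u => (B u).adjugate i j) atTop (nhds (A.transpose.adjugate i j)) := by
      have hc : Continuous fun X : Matrix (Fin n) (Fin n) ℝ => X.adjugate i j :=
        ((Continuous.matrix_adjugate continuous_id).matrix_elem i j)
      exact (hc.continuousAt (x := A.transpose)).tendsto.comp hBA
    have hdi : Tendsto (fun u => ((B u).det)⁻¹) atTop (nhds (A.transpose.det)⁻¹) :=
      hdet.inv₀ hAdet
    have hpt : A.transpose⁻¹ i j = (A.transpose.det)⁻¹ * A.transpose.adjugate i j := by
      rw [Matrix.inv_def, Ring.inverse_eq_inv']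
      simp [Matrix.smul_apply, smul_eq_mul]
    rw [hpt]
    refine (hdi.mul hadj).congr fun u => ?_
    rw [Matrix.inv_def, Ring.inverse_eq_inv']
    simp [Matrix.smul_apply, smul_eq_mul]
  -- the vectors
  set v : ℕ → Fin n → ℝ := fun u k => (z k : ℝ) - ω u k / (2 * Real.pi) with hv
  have hvlim : ∀ k, Tendsto (fun u => v u k) atTop
      (nhds ((z k : ℝ) - ω₀ k / (2 * Real.pi))) := by
    intro k
    exact (tendsto_const_nhds.sub (((tendsto_pi_nhds.1 hω) k).div_const _))
  -- eventual identity : u * w u k = ((B u)⁻¹.mulVec (v u)) k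
  have hMdet : ∀ u, (((M u).map (Int.cast : ℤ → ℝ)).transpose).det ≠ 0 := by
    intro u
    rw [Matrix.det_transpose]
    have : ((M u).map (Int.cast : ℤ → ℝ)).det = (((M u).det : ℤ) : ℝ) :=
      (RingHom.map_det (Int.castRingHom ℝ) (M u)).symm
    rw [this]
    exact_mod_cast hM u
  have hkey : ∀ᶠ u : ℕ in atTop, ∀ k,
      (u : ℝ) * w u k = ∑ j, (B u)⁻¹ k j * v u j := by
    filter_upwards [eventually_ge_atTop 1] with u hu k
    have hu0 : (u : ℝ) ≠ 0 := by positivity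
    have hBinv : (B u)⁻¹ = (u : ℝ) • (((M u).map (Int.cast : ℤ → ℝ)).transpose)⁻¹ := by
      apply Matrix.inv_eq_right_inv
      show (((u : ℝ)⁻¹ • (M u).map (Int.cast : ℤ → ℝ))).transpose *
          ((u : ℝ) • (((M u).map (Int.cast : ℤ → ℝ)).transpose)⁻¹) = 1
      rw [Matrix.transpose_smul, Matrix.smul_mul, Matrix.mul_smul, smul_smul,
        inv_mul_cancel₀ hu0, one_smul]
      exact Matrix.mul_nonsing_inv _ (isUnit_iff_ne_zero.2 (hMdet u))
    rw [hBinv, hw u]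
    simp [Matrix.mulVec, dotProduct, Matrix.smul_apply, smul_eq_mul, hv,
      Finset.mul_sum, mul_assoc]
  -- limit of u * w u k
  have hlim : ∀ k, Tendsto (fun u : ℕ => (u : ℝ) * w u k) atTop (nhds (w₀ k)) := by
    intro k
    have h1 : Tendsto (fun u => ∑ j, (B u)⁻¹ k j * v u j) atTop
        (nhds (∑ j, A.transpose⁻¹ k j * ((z j : ℝ) - ω₀ j / (2 * Real.pi)))) := by
      exact tendsto_finset_sum _ fun j _ => (hinv k j).mul (hvlim j)
    have hw₀k : w₀ k = ∑ j, A.transpose⁻¹ k j * ((z j : ℝ) - ω₀ j / (2 * Real.pi)) := by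
      rw [hw₀]; simp [Matrix.mulVec, dotProduct]
    rw [hw₀k]
    refine h1.congr' ?_
    filter_upwards [hkey] with u hu
    exact (hu k).symm
  -- w u k → 0
  have hwz : ∀ k, Tendsto (fun u : ℕ => w u k) atTop (nhds 0) := by
    intro k
    have := (hlim k).mul (tendsto_inv_atTop_zero.comp tendsto_natCast_atTop_atTop)
    rw [mul_zero] at this
    refine this.congr' ?_
    filter_upwards [eventually_ge_atTop 1] with u hu
    have hu0 : (u : ℝ) ≠ 0 := by positivity
    simp only [Function.comp_apply]
    field_simp
  -- u * sin(π w u k) → π * w₀ k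
  have hsin : ∀ k, Tendsto (fun u : ℕ => (u : ℝ) * Real.sin (Real.pi * w u k)) atTop
      (nhds (Real.pi * w₀ k)) := by
    intro k
    have hmain : Tendsto (fun u : ℕ => (u : ℝ) * (Real.pi * w u k)) atTop
        (nhds (Real.pi * w₀ k)) := by
      have := (hlim k).const_mul Real.pi
      refine this.congr fun u => by ring
    have hdiff : Tendsto (fun u : ℕ =>
        (u : ℝ) * (Real.sin (Real.pi * w u k) - Real.pi * w u k)) atTop (nhds 0) := by
      apply squeeze_zero_norm'
        (a := fun u : ℕ => |(u : ℝ) * (Real.pi * w u k)| * |Real.pi * w u k| ^ 2)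
      · have hev : ∀ᶠ u : ℕ in atTop, |Real.pi * w u k| ≤ 1 := by
          have := (hwz k).const_mul Real.pi
          rw [mul_zero] at this
          have h2 := this.abs
          rw [abs_zero] at h2
          filter_upwards [h2.eventually_le_const (by norm_num : (0:ℝ) < 1)] with u hu
          exact hu
        filter_upwards [hev] with u hu
        have hb := abs_sin_sub_le_cube (Real.pi * w u k) hu
        calc ‖(u : ℝ) * (Real.sin (Real.pi * w u k) - Real.pi * w u k)‖
            = |(u : ℝ)| * |Real.sin (Real.pi * w u k) - Real.pi * w u k| := by
              rw [Real.norm_eq_abs, abs_mul]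
          _ ≤ |(u : ℝ)| * |Real.pi * w u k| ^ 3 := by
              exact mul_le_mul_of_nonneg_left hb (abs_nonneg _)
          _ = |(u : ℝ) * (Real.pi * w u k)| * |Real.pi * w u k| ^ 2 := by
              simp only [abs_mul, mul_pow]; ring
      · have h1 : Tendsto (fun u : ℕ => |(u : ℝ) * (Real.pi * w u k)|) atTop
            (nhds |Real.pi * w₀ k|) := hmain.abs
        have h2 : Tendsto (fun u : ℕ => |Real.pi * w u k| ^ 2) atTop (nhds 0) := by
          have := ((hwz k).const_mul Real.pi)
          rw [mul_zero] at this
          simpa only [sq_abs, zero_pow two_ne_zero] using this.pow 2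
        have := h1.mul h2
        rwa [mul_zero] at this
    have := hmain.add hdiff
    rw [add_zero] at this
    refine this.congr fun u => by ring
  -- final assembly
  have hsum : Tendsto (fun u : ℕ => ∑ k, 4 * ((u : ℝ) * Real.sin (Real.pi * w u k)) ^ 2)
      atTop (nhds (∑ k, 4 * (Real.pi * w₀ k) ^ 2)) := by
    exact tendsto_finset_sum _ fun k _ => ((hsin k).pow 2).const_mul 4
  have heq1 : ∀ u : ℕ, 4 * (u : ℝ) ^ 2 * ∑ k, Real.sin (Real.pi * w u k) ^ 2
      = ∑ k, 4 * ((u : ℝ) * Real.sin (Real.pi * w u k)) ^ 2 := by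
    intro u
    rw [Finset.mul_sum]
    exact Finset.sum_congr rfl fun k _ => by ring
  have heq2 : 4 * Real.pi ^ 2 * ∑ k, w₀ k ^ 2 = ∑ k, 4 * (Real.pi * w₀ k) ^ 2 := by
    rw [Finset.mul_sum]
    exact Finset.sum_congr rfl fun k _ => by ring
  rw [heq2]
  exact hsum.congr fun u => (heq1 u).symm
end

section
/- Let t > 0, let (v_u)_{u∈ℕ} be a sequence of integers, and let I_m(s) = (1/π)∫₀^π e^{s cos θ} cos(mθ) dθ. (i) If v_u/u → a as u → ∞ for some real a > 0, then lim_{u→∞} v_u e^{−2u²t} I_{v_u}(2u²t) = (a/√(4πt)) e^{−a²/(4t)}. (ii) If the sequence (v_u) is bounded, then lim_{u→∞} u e^{−2u²t} I_{v_u}(2u²t) = 1/√(4πt). -/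
open Real Filter MeasureTheory Complex Set

/-- The modified Bessel function of integer order `m`:
`I_m(s) = (1/π)∫₀^π e^{s cos θ} cos(mθ) dθ`. -/
noncomputable def besselI (m : ℤ) (s : ℝ) : ℝ :=
  (1 / Real.pi) * ∫ θ in (0:ℝ)..Real.pi, Real.exp (s * Real.cos θ) * Real.cos (m * θ)

-- sin z / z → 1
lemma sin_div_self_tendsto : Tendsto (fun z : ℝ => Real.sin z / z) (nhdsWithin 0 {(0:ℝ)}ᶜ) (nhds 1) := by
  have h := (Real.hasDerivAt_sin 0)
  rw [Real.cos_zero, hasDerivAt_iff_tendsto_slope] at h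
  refine h.congr' ?_
  filter_upwards [self_mem_nhdsWithin] with z hz
  simp [slope, Real.sin_zero]
  ring

-- Gaussian cosine integral
lemma gauss_cos (t b : ℝ) (ht : 0 < t) :
    ∫ x : ℝ, Real.exp (-t * x ^ 2) * Real.cos (b * x)
      = Real.sqrt (Real.pi / t) * Real.exp (-b ^ 2 / (4 * t)) := by
  have hre : (0:ℝ) < ((t:ℂ)).re := by simpa using ht
  have hI := fourierIntegral_gaussian (b := (t:ℂ)) hre (b : ℂ)
  have hc : ∀ x : ℝ, -(t:ℂ) * (x:ℂ) ^ 2 = ((-t * x ^ 2 : ℝ) : ℂ) := fun x => by push_cast; ring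
  have hib : ∀ x : ℝ, Complex.I * (b:ℂ) * (x:ℂ) = ((b * x : ℝ) : ℂ) * Complex.I := fun x => by
    push_cast; ring
  have hint : Integrable (fun x : ℝ => Complex.exp (Complex.I * b * x) * Complex.exp (-(t:ℂ) * x ^ 2)) := by
    refine (Integrable.mono' (g := fun x : ℝ => Real.exp (-t * x ^ 2))
      (integrable_exp_neg_mul_sq ht) ?_ ?_)
    · apply Continuous.aestronglyMeasurable; continuity
    · filter_upwards with x
      rw [norm_mul, hib x, hc x,
        Complex.norm_exp_ofReal_mul_I, Complex.norm_exp, Complex.ofReal_re, one_mul]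
  have hre' : ∀ x : ℝ, (Complex.exp (Complex.I * b * x) * Complex.exp (-(t:ℂ) * x ^ 2)).re
      = Real.exp (-t * x ^ 2) * Real.cos (b * x) := by
    intro x
    rw [← Complex.exp_add, hib x, hc x, Complex.exp_re]
    simp only [Complex.add_re, Complex.add_im, Complex.mul_re, Complex.mul_im,
      Complex.ofReal_re, Complex.ofReal_im, Complex.I_re, Complex.I_im]
    norm_num [mul_comm]
  calc ∫ x : ℝ, Real.exp (-t * x ^ 2) * Real.cos (b * x)
      = ∫ x : ℝ, (Complex.exp (Complex.I * b * x) * Complex.exp (-(t:ℂ) * x ^ 2)).re := by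
        simp_rw [hre']
    _ = (∫ x : ℝ, Complex.exp (Complex.I * b * x) * Complex.exp (-(t:ℂ) * x ^ 2)).re :=
        integral_re hint
    _ = ((↑Real.pi / (t:ℂ)) ^ (1 / 2 : ℂ) * Complex.exp (-(b:ℂ) ^ 2 / (4 * (t:ℂ)))).re := by
        rw [hI]
    _ = Real.sqrt (Real.pi / t) * Real.exp (-b ^ 2 / (4 * t)) := by
        have h1 : (↑Real.pi / (t:ℂ)) ^ (1/2 : ℂ) = ((Real.sqrt (Real.pi / t) : ℝ) : ℂ) := by
          rw [Real.sqrt_eq_rpow]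
          rw [Complex.ofReal_cpow (by positivity)]
          push_cast
          ring_nf
        have h2 : Complex.exp (-(b:ℂ) ^ 2 / (4 * (t:ℂ))) = ((Real.exp (-b ^ 2 / (4 * t)) : ℝ) : ℂ) := by
          rw [Complex.ofReal_exp]
          push_cast
          ring_nf
        rw [h1, h2, ← Complex.ofReal_mul, Complex.ofReal_re]

lemma core (t : ℝ) (ht : 0 < t) (v : ℕ → ℤ) (b : ℝ)
    (hb : Tendsto (fun u : ℕ => (v u : ℝ) / u) atTop (nhds b)) :
    Tendsto (fun u : ℕ =>
        (u : ℝ) * (Real.exp (-2 * (u : ℝ) ^ 2 * t) * besselI (v u) (2 * (u : ℝ) ^ 2 * t)))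
      atTop (nhds (Real.exp (-b ^ 2 / (4 * t)) / Real.sqrt (4 * Real.pi * t))) := by
  have hπ : (0:ℝ) < Real.pi := Real.pi_pos
  set F : ℕ → ℝ → ℝ := fun u => (Set.Ioc (0:ℝ) (u * Real.pi)).indicator
    (fun x => Real.exp (2 * (u:ℝ) ^ 2 * t * (Real.cos (x / u) - 1)) *
      Real.cos ((v u : ℝ) * (x / u))) with hF
  set f : ℝ → ℝ := (Set.Ioi (0:ℝ)).indicator
    (fun x => Real.exp (-t * x ^ 2) * Real.cos (b * x)) with hf
  -- measurability
  have hmeas : ∀ u : ℕ, AEStronglyMeasurable (F u) volume := by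
    intro u
    apply AEStronglyMeasurable.indicator _ measurableSet_Ioc
    apply Continuous.aestronglyMeasurable
    continuity
  -- domination
  have hbound : ∀ u : ℕ, ∀ᵐ x : ℝ, ‖F u x‖ ≤ Real.exp (-(4 * t / Real.pi ^ 2) * x ^ 2) := by
    intro u
    filter_upwards with x
    by_cases hx : x ∈ Set.Ioc (0:ℝ) (u * Real.pi)
    · rw [hF]; simp only [Set.indicator_of_mem hx]
      rcases Nat.eq_zero_or_pos u with h0 | hu
      · subst h0; simp at hx
      · have hupos : (0:ℝ) < u := by exact_mod_cast hu
        set y := x / (u:ℝ) with hy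
        have hy0 : 0 < y := div_pos hx.1 hupos
        have hyπ : y ≤ Real.pi := by
          rw [hy, div_le_iff₀ hupos]
          calc x ≤ u * Real.pi := hx.2
            _ = Real.pi * u := by ring
        have hcos : Real.cos y ≤ 1 - 2 / Real.pi ^ 2 * y ^ 2 :=
          Real.cos_le_one_sub_mul_cos_sq (by rw [abs_of_pos hy0]; exact hyπ)
        have hxy : x = u * y := by rw [hy]; field_simp
        have h1 : 2 * (u:ℝ) ^ 2 * t * (Real.cos y - 1) ≤ -(4 * t / Real.pi ^ 2) * x ^ 2 := by
          have h2 : Real.cos y - 1 ≤ -(2 / Real.pi ^ 2) * y ^ 2 := by linarith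
          have h3 := mul_le_mul_of_nonneg_left h2 (show (0:ℝ) ≤ 2 * (u:ℝ) ^ 2 * t by positivity)
          calc 2 * (u:ℝ) ^ 2 * t * (Real.cos y - 1)
              ≤ 2 * (u:ℝ) ^ 2 * t * (-(2 / Real.pi ^ 2) * y ^ 2) := h3
            _ = -(4 * t / Real.pi ^ 2) * ((u:ℝ) * y) ^ 2 := by field_simp; ring
            _ = -(4 * t / Real.pi ^ 2) * x ^ 2 := by rw [← hxy]
        calc ‖Real.exp (2 * (u:ℝ) ^ 2 * t * (Real.cos y - 1)) * Real.cos ((v u : ℝ) * y)‖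
            = Real.exp (2 * (u:ℝ) ^ 2 * t * (Real.cos y - 1)) * |Real.cos ((v u : ℝ) * y)| := by
              rw [norm_mul, Real.norm_eq_abs, Real.norm_eq_abs, Real.abs_exp]
          _ ≤ Real.exp (2 * (u:ℝ) ^ 2 * t * (Real.cos y - 1)) * 1 := by
              exact mul_le_mul_of_nonneg_left (Real.abs_cos_le_one _) (Real.exp_nonneg _)
          _ ≤ Real.exp (-(4 * t / Real.pi ^ 2) * x ^ 2) := by
              rw [mul_one]; exact Real.exp_le_exp.mpr h1
    · rw [hF]; simp only [Set.indicator_of_notMem hx]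
      simp [Real.exp_nonneg]
  have hint_bound : Integrable (fun x : ℝ => Real.exp (-(4 * t / Real.pi ^ 2) * x ^ 2)) volume := by
    exact integrable_exp_neg_mul_sq (by positivity)
  -- pointwise limit
  have hlim : ∀ᵐ x : ℝ, Tendsto (fun u : ℕ => F u x) atTop (nhds (f x)) := by
    filter_upwards [compl_mem_ae_iff.mpr (volume_singleton (a := (0:ℝ)))] with x hx
    have hx0 : x ≠ 0 := hx
    rcases lt_or_gt_of_ne hx0 with hneg | hpos
    · have h1 : ∀ u : ℕ, F u x = 0 := by
        intro u
        rw [hF]; exact Set.indicator_of_notMem (fun h => absurd h.1 (not_lt.mpr hneg.le)) _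
      have h2 : f x = 0 := Set.indicator_of_notMem (by simpa using hneg.not_gt) _
      simp only [h1, h2]; exact tendsto_const_nhds
    · -- x > 0
      have key : ∀ u : ℕ, 2 * (u:ℝ) ^ 2 * t * (Real.cos (x / u) - 1)
          = -4 * t * ((u:ℝ) * Real.sin (x / (2 * u))) ^ 2 := by
        intro u
        have h2 : (2:ℝ) * (x / (2 * u)) = x / u := by
          rcases eq_or_ne (u:ℝ) 0 with h | h
          · simp [h]
          · field_simp
        have hs := Real.sin_sq_eq_half_sub (x / (2 * (u:ℝ)))
        rw [h2] at hs
        have h3 : Real.cos (x / (u:ℝ)) - 1 = -2 * Real.sin (x / (2 * (u:ℝ))) ^ 2 := by linarith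
        rw [h3]; ring
      have hz : Tendsto (fun u : ℕ => x / (2 * (u:ℝ))) atTop (nhdsWithin 0 {(0:ℝ)}ᶜ) := by
        apply tendsto_nhdsWithin_of_tendsto_nhds_of_eventually_within
        · have h := tendsto_const_div_atTop_nhds_zero_nat (x / 2)
          refine h.congr fun u => ?_
          rw [div_div]
        · filter_upwards [eventually_gt_atTop 0] with u hu
          have : (0:ℝ) < u := by exact_mod_cast hu
          exact (ne_of_gt (div_pos hpos (by positivity)))
      have hsin : Tendsto (fun u : ℕ => (u:ℝ) * Real.sin (x / (2 * u))) atTop (nhds (x / 2)) := by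
        have h1 := (sin_div_self_tendsto.comp hz).const_mul (x / 2)
        rw [mul_one] at h1
        refine h1.congr' ?_
        filter_upwards [eventually_gt_atTop 0] with u hu
        have hu0 : (0:ℝ) < u := by exact_mod_cast hu
        have hz0 : x / (2 * (u:ℝ)) ≠ 0 := ne_of_gt (div_pos hpos (by positivity))
        simp only [Function.comp_apply]
        field_simp
      have hexp : Tendsto (fun u : ℕ => Real.exp (2 * (u:ℝ) ^ 2 * t * (Real.cos (x / u) - 1)))
          atTop (nhds (Real.exp (-t * x ^ 2))) := by
        have h2 : Tendsto (fun u : ℕ => -4 * t * ((u:ℝ) * Real.sin (x / (2 * u))) ^ 2)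
            atTop (nhds (-4 * t * (x / 2) ^ 2)) := (hsin.pow 2).const_mul _
        have h3 : -4 * t * (x / 2) ^ 2 = -t * x ^ 2 := by ring
        rw [h3] at h2
        simp_rw [key]
        exact (Real.continuous_exp.continuousAt.tendsto.comp h2)
      have hcosf : Tendsto (fun u : ℕ => Real.cos ((v u : ℝ) * (x / u)))
          atTop (nhds (Real.cos (b * x))) := by
        have harg : Tendsto (fun u : ℕ => (v u : ℝ) * (x / u)) atTop (nhds (b * x)) := by
          have h := hb.mul_const x
          refine h.congr fun u => ?_
          ring
        exact Real.continuous_cos.continuousAt.tendsto.comp harg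
      have hG := hexp.mul hcosf
      have h2 : f x = Real.exp (-t * x ^ 2) * Real.cos (b * x) :=
        Set.indicator_of_mem hpos _
      rw [h2]
      refine hG.congr' ?_
      filter_upwards [eventually_ge_atTop (⌈x / Real.pi⌉₊ + 1)] with u hu
      have h3 : x / Real.pi ≤ u := by
        calc x / Real.pi ≤ (⌈x / Real.pi⌉₊ : ℝ) := Nat.le_ceil _
          _ ≤ u := by exact_mod_cast Nat.le_of_succ_le hu
      have h4 : x ≤ u * Real.pi := by
        rw [div_le_iff₀ hπ] at h3; linarith
      rw [hF]
      exact (Set.indicator_of_mem (show x ∈ Set.Ioc (0:ℝ) ((u:ℝ) * Real.pi) from ⟨hpos, h4⟩)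
        (fun x => Real.exp (2 * (u:ℝ) ^ 2 * t * (Real.cos (x / u) - 1)) *
          Real.cos ((v u : ℝ) * (x / u)))).symm
  have hDCT := tendsto_integral_of_dominated_convergence _ hmeas hint_bound hbound hlim
  have hmul := hDCT.const_mul (1 / Real.pi)
  -- value of the limit
  have hval : (1 / Real.pi) * ∫ x, f x
      = Real.exp (-b ^ 2 / (4 * t)) / Real.sqrt (4 * Real.pi * t) := by
    have heven : ∀ x : ℝ, Real.exp (-t * |x| ^ 2) * Real.cos (b * |x|)
        = Real.exp (-t * x ^ 2) * Real.cos (b * x) := by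
      intro x
      rcases abs_choice x with h | h
      · rw [h]
      · rw [h, mul_neg, Real.cos_neg, neg_sq]
    have habs := integral_comp_abs (f := fun x : ℝ => Real.exp (-t * x ^ 2) * Real.cos (b * x))
    simp_rw [heven] at habs
    rw [gauss_cos t b ht] at habs
    have hIoi : ∫ x, f x = ∫ x in Set.Ioi (0:ℝ), Real.exp (-t * x ^ 2) * Real.cos (b * x) := by
      rw [hf, integral_indicator measurableSet_Ioi]
    rw [hIoi]
    have h2 : ∫ x in Set.Ioi (0:ℝ), Real.exp (-t * x ^ 2) * Real.cos (b * x)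
        = Real.sqrt (Real.pi / t) * Real.exp (-b ^ 2 / (4 * t)) / 2 := by linarith
    rw [h2]
    have h4 : Real.sqrt (4 * Real.pi * t) = 2 * (Real.sqrt Real.pi * Real.sqrt t) := by
      rw [show (4:ℝ) * Real.pi * t = 2 ^ 2 * (Real.pi * t) by ring,
        Real.sqrt_mul (by positivity), Real.sqrt_sq (by norm_num), Real.sqrt_mul hπ.le]
    have h5 : Real.sqrt (Real.pi / t) = Real.sqrt Real.pi / Real.sqrt t :=
      Real.sqrt_div hπ.le t
    have hsπ : (0:ℝ) < Real.sqrt Real.pi := Real.sqrt_pos.mpr hπ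
    have hst : (0:ℝ) < Real.sqrt t := Real.sqrt_pos.mpr ht
    have hππ : Real.sqrt Real.pi * Real.sqrt Real.pi = Real.pi := Real.mul_self_sqrt hπ.le
    rw [h4, h5]
    field_simp
    linear_combination hππ
  rw [hval] at hmul
  refine hmul.congr' ?_
  filter_upwards [eventually_ge_atTop 1] with u hu
  -- representation
  have hu0 : ((u:ℕ):ℝ) ≠ 0 := by
    have : (0:ℝ) < u := by exact_mod_cast hu
    exact ne_of_gt this
  rw [besselI]
  set s := 2 * (u:ℝ) ^ 2 * t with hs
  set m := ((v u : ℤ) : ℝ) with hm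
  have h1 : Real.exp (-s) * ((1 / Real.pi) * ∫ θ in (0:ℝ)..Real.pi,
        Real.exp (s * Real.cos θ) * Real.cos (m * θ))
      = (1 / Real.pi) * ∫ θ in (0:ℝ)..Real.pi,
        Real.exp (s * (Real.cos θ - 1)) * Real.cos (m * θ) := by
    rw [← mul_assoc, mul_comm (Real.exp (-s)) (1 / Real.pi), mul_assoc,
      ← intervalIntegral.integral_const_mul]
    congr 1
    apply intervalIntegral.integral_congr
    intro θ _
    dsimp only
    rw [← mul_assoc, ← Real.exp_add]
    congr 2
    ring
  have h2 : (∫ x in (0:ℝ)..((u:ℝ) * Real.pi),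
        Real.exp (s * (Real.cos (x / u) - 1)) * Real.cos (m * (x / u)))
      = (u:ℝ) • ∫ θ in (0:ℝ)..Real.pi, Real.exp (s * (Real.cos θ - 1)) * Real.cos (m * θ) := by
    rw [intervalIntegral.integral_comp_div
      (fun θ => Real.exp (s * (Real.cos θ - 1)) * Real.cos (m * θ)) hu0]
    rw [zero_div, mul_div_cancel_left₀ _ hu0]
  have h3 : (∫ x in (0:ℝ)..((u:ℝ) * Real.pi),
        Real.exp (s * (Real.cos (x / u) - 1)) * Real.cos (m * (x / u))) = ∫ x, F u x := by
    rw [intervalIntegral.integral_of_le (by positivity), hF, integral_indicator measurableSet_Ioc,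
      hs]
  rw [hf] at *
  calc (1 / Real.pi) * ∫ x, F u x
      = (1 / Real.pi) * ((u:ℝ) • ∫ θ in (0:ℝ)..Real.pi,
          Real.exp (s * (Real.cos θ - 1)) * Real.cos (m * θ)) := by rw [← h2, h3]
    _ = (u:ℝ) * ((1 / Real.pi) * ∫ θ in (0:ℝ)..Real.pi,
          Real.exp (s * (Real.cos θ - 1)) * Real.cos (m * θ)) := by
        rw [smul_eq_mul]; ring
    _ = (u:ℝ) * (Real.exp (-s) * ((1 / Real.pi) * ∫ θ in (0:ℝ)..Real.pi,
          Real.exp (s * Real.cos θ) * Real.cos (m * θ))) := by rw [h1]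
    _ = (u:ℝ) * (Real.exp (-2 * (u:ℝ) ^ 2 * t) * ((1 / Real.pi) * ∫ θ in (0:ℝ)..Real.pi,
          Real.exp (s * Real.cos θ) * Real.cos (m * θ))) := by
        rw [show Real.exp (-2 * (u:ℝ) ^ 2 * t) = Real.exp (-s) by rw [hs]; ring_nf]

/-- pointwise limits of rescaled discrete heat kernel factors on `ℤ`.
(i) If `v_u/u → a > 0`, then `v_u e^{-2u²t} I_{v_u}(2u²t) → (a/√(4πt)) e^{-a²/(4t)}`.
(ii) If `(v_u)` is bounded, then `u e^{-2u²t} I_{v_u}(2u²t) → 1/√(4πt)`. -/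
theorem rescaled_bessel_heat_kernel_limits
    (t : ℝ) (ht : 0 < t) (v : ℕ → ℤ) :
    (∀ a : ℝ, 0 < a → Tendsto (fun u : ℕ => (v u : ℝ) / u) atTop (nhds a) →
      Tendsto (fun u : ℕ =>
          (v u : ℝ) * (Real.exp (-2 * (u : ℝ) ^ 2 * t) * besselI (v u) (2 * (u : ℝ) ^ 2 * t)))
        atTop
        (nhds (a / Real.sqrt (4 * Real.pi * t) * Real.exp (-a ^ 2 / (4 * t))))) ∧
    ((∃ C : ℤ, ∀ u : ℕ, |v u| ≤ C) →
      Tendsto (fun u : ℕ =>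
          (u : ℝ) * (Real.exp (-2 * (u : ℝ) ^ 2 * t) * besselI (v u) (2 * (u : ℝ) ^ 2 * t)))
        atTop
        (nhds (1 / Real.sqrt (4 * Real.pi * t)))) := by
  constructor
  · intro a ha hta
    have hc := core t ht v a hta
    have h := hta.mul hc
    have hval : a * (Real.exp (-a ^ 2 / (4 * t)) / Real.sqrt (4 * Real.pi * t))
        = a / Real.sqrt (4 * Real.pi * t) * Real.exp (-a ^ 2 / (4 * t)) := by ring
    rw [hval] at h
    refine h.congr' ?_
    filter_upwards [eventually_ge_atTop 1] with u hu
    have hu0 : ((u : ℕ) : ℝ) ≠ 0 := by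
      have : (0:ℝ) < u := by exact_mod_cast hu
      exact ne_of_gt this
    field_simp
  · rintro ⟨C, hC⟩
    have hb0 : Tendsto (fun u : ℕ => (v u : ℝ) / u) atTop (nhds 0) := by
      refine squeeze_zero_norm (fun u => ?_) (tendsto_const_div_atTop_nhds_zero_nat (C : ℝ))
      rw [Real.norm_eq_abs, abs_div, Nat.abs_cast]
      have hvC : |(v u : ℝ)| ≤ (C : ℝ) := by
        rw [← Int.cast_abs]; exact_mod_cast hC u
      rcases Nat.eq_zero_or_pos u with h0 | hu
      · subst h0; simp
      · have hupos : (0:ℝ) < u := by exact_mod_cast hu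
        exact div_le_div_of_nonneg_right hvC hupos.le
    have hc := core t ht v 0 hb0
    simpa using hc
end
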